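/- arXiv:1909.05420 — 5 statements merged into one kernel-verified Lean document; each statement's English description precedes it below -/
import Mathlib

section
/- Let x = (x_1,…,x_n) and y = (y_1,…,y_n) be nonnegative real vectors with ∑ x_i = ∑ y_i, ∑ x_i² = ∑ y_i², and such that y takes only two values: y_i = a for i ≤ n-1 and y_n = b with a ≤ b. Then ∏_i x_i ≤ ∏_i y_i, i.e., ∏ x_i ≤ a^{n-1} b. -/
open BigOperators

/-- Classical inequality: `log B > (B-1) - (B-1)²/2` for `B > 1`. -/
lemma aux_log_lower (B : ℝ) (hB : 1 < B) :
    (B - 1) - (B - 1) ^ 2 / 2 < Real.log B := by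
  set f : ℝ → ℝ := fun x => Real.log x - (x - 1) + (x - 1) ^ 2 / 2 with hf
  have hderiv : ∀ x : ℝ, 0 < x → HasDerivAt f (x⁻¹ - 1 + 2 * (x - 1) ^ 1 * 1 / 2) x := by
    intro x hx
    have h1 : HasDerivAt (fun u : ℝ => u - 1) 1 x := (hasDerivAt_id x).sub_const 1
    exact ((Real.hasDerivAt_log hx.ne').sub h1).add ((h1.pow 2).div_const 2)
  have hmono : StrictMonoOn f (Set.Ici (1:ℝ)) := by
    apply strictMonoOn_of_deriv_pos (convex_Ici 1)
    · intro x hx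
      have hx0 : (0:ℝ) < x := lt_of_lt_of_le one_pos hx
      exact ((hderiv x hx0).continuousAt).continuousWithinAt
    · intro x hx
      rw [interior_Ici] at hx
      have hx1 : (1:ℝ) < x := hx
      have hx0 : (0:ℝ) < x := lt_trans one_pos hx1
      rw [(hderiv x hx0).deriv]
      have : x⁻¹ - 1 + 2 * (x - 1) ^ 1 * 1 / 2 = (x - 1) ^ 2 / x := by
        field_simp; ring
      rw [this]
      have h2 : 0 < (x - 1) ^ 2 := by nlinarith
      exact div_pos h2 hx0
  have := hmono (Set.self_mem_Ici) (le_of_lt hB : (1:ℝ) ≤ B) hB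
  simp only [hf, Real.log_one] at this
  nlinarith [this]

/-- Tangent-quadratic bound for `log` on `(0, B]`. -/
lemma log_le_quad (B : ℝ) (hB : 1 < B) {u : ℝ} (hu : 0 < u) (huB : u ≤ B) :
    Real.log u ≤ (u - 1) + (Real.log B - B + 1) / (B - 1) ^ 2 * (u - 1) ^ 2 := by
  set γ := (Real.log B - B + 1) / (B - 1) ^ 2 with hγdef
  have hB1 : (0:ℝ) < B - 1 := by linarith
  have hB1sq : (0:ℝ) < (B - 1) ^ 2 := by positivity
  have hγneg : γ < 0 := by
    apply div_neg_of_neg_of_pos _ hB1sq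
    have := Real.log_lt_sub_one_of_pos (by linarith : (0:ℝ) < B) (by linarith : B ≠ 1)
    linarith
  have hγhalf : -(1/2 : ℝ) < γ := by
    rw [hγdef, lt_div_iff₀ hB1sq]
    nlinarith [aux_log_lower B hB]
  set G : ℝ → ℝ := fun v => (v - 1) + γ * (v - 1) ^ 2 - Real.log v with hG
  have hderiv : ∀ v : ℝ, 0 < v →
      HasDerivAt G (1 + γ * (2 * (v - 1) ^ 1 * 1) - v⁻¹) v := by
    intro v hv
    have h1 : HasDerivAt (fun u : ℝ => u - 1) 1 v := (hasDerivAt_id v).sub_const 1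
    exact (h1.add ((h1.pow 2).const_mul γ)).sub (Real.hasDerivAt_log hv.ne')
  have hderiv' : ∀ v : ℝ, 0 < v → deriv G v = (v - 1) * (2 * γ * v + 1) / v := by
    intro v hv
    rw [(hderiv v hv).deriv]
    field_simp
    ring
  have hG1 : G 1 = 0 := by simp [hG]
  have hGB : G B = 0 := by
    have : γ * (B - 1) ^ 2 = Real.log B - B + 1 :=
      div_mul_cancel₀ _ (ne_of_gt hB1sq)
    simp only [hG]; linarith
  set r := -(1 / (2 * γ)) with hr
  have h2γ : 2 * γ < 0 := by linarith
  have h2γne : 2 * γ ≠ 0 := ne_of_lt h2γ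
  have hprodr : r * (2 * γ) = -1 := by
    rw [hr]; field_simp; rw [div_self (ne_of_lt hγneg)]
  have hr1 : 1 < r := by nlinarith [hprodr]
  have hrγ : 2 * γ * r + 1 = 0 := by linarith [hprodr, mul_comm r (2*γ)]
  suffices h : 0 ≤ G u by
    simp only [hG] at h; linarith
  rcases lt_trichotomy u 1 with h1 | h1 | h1
  · -- G strictly antitone on [u, 1]
    have hanti : StrictAntiOn G (Set.Icc u 1) := by
      apply strictAntiOn_of_deriv_neg (convex_Icc u 1)
      · intro v hv
        have hv0 : 0 < v := lt_of_lt_of_le hu hv.1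
        exact ((hderiv v hv0).continuousAt).continuousWithinAt
      · intro v hv
        rw [interior_Icc] at hv
        have hv0 : 0 < v := lt_trans hu hv.1
        rw [hderiv' v hv0]
        apply div_neg_of_neg_of_pos _ hv0
        have hfac1 : v - 1 < 0 := by linarith [hv.2]
        have hfac2 : 0 < 2 * γ * v + 1 := by nlinarith [hv.2, hr1, hrγ, h2γ]
        nlinarith
    have := hanti (Set.mem_Icc.2 ⟨le_refl u, le_of_lt h1⟩)
      (Set.mem_Icc.2 ⟨le_of_lt h1, le_refl 1⟩) h1
    rw [hG1] at this; linarith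
  · rw [h1, hG1]
  · rcases le_or_gt u r with h2 | h2
    · -- G strictly monotone on [1, u]
      have hmono : StrictMonoOn G (Set.Icc 1 u) := by
        apply strictMonoOn_of_deriv_pos (convex_Icc 1 u)
        · intro v hv
          have hv0 : 0 < v := lt_of_lt_of_le one_pos hv.1
          exact ((hderiv v hv0).continuousAt).continuousWithinAt
        · intro v hv
          rw [interior_Icc] at hv
          have hv0 : 0 < v := lt_trans one_pos hv.1
          rw [hderiv' v hv0]
          apply div_pos _ hv0
          have hfac1 : 0 < v - 1 := by linarith [hv.1]
          have hvr : v < r := lt_of_lt_of_le hv.2 h2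
          have hfac2 : 0 < 2 * γ * v + 1 := by nlinarith
          positivity
      have := hmono (Set.mem_Icc.2 ⟨le_refl 1, le_of_lt h1⟩)
        (Set.mem_Icc.2 ⟨le_of_lt h1, le_refl u⟩) h1
      rw [hG1] at this; linarith
    · rcases eq_or_lt_of_le huB with hEq | hlt
      · rw [hEq, hGB]
      · -- G strictly antitone on [u, B]
        have hanti : StrictAntiOn G (Set.Icc u B) := by
          apply strictAntiOn_of_deriv_neg (convex_Icc u B)
          · intro v hv
            have hv0 : 0 < v := lt_of_lt_of_le hu hv.1
            exact ((hderiv v hv0).continuousAt).continuousWithinAt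
          · intro v hv
            rw [interior_Icc] at hv
            have hv0 : 0 < v := lt_trans hu hv.1
            rw [hderiv' v hv0]
            apply div_neg_of_neg_of_pos _ hv0
            have hfac1 : 0 < v - 1 := by linarith [hv.1, h1]
            have hvr : r < v := lt_trans h2 hv.1
            have hfac2 : 2 * γ * v + 1 < 0 := by nlinarith
            nlinarith
        have := hanti (Set.mem_Icc.2 ⟨le_refl u, le_of_lt hlt⟩)
          (Set.mem_Icc.2 ⟨le_of_lt hlt, le_refl B⟩) hlt
        rw [hGB] at this; linarith

/-- Normalized main inequality. -/
lemma normalized_key (n : ℕ) (B : ℝ) (hB : 1 < B) (t : Fin (n + 1) → ℝ)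
    (ht : ∀ i, 0 ≤ t i)
    (h1 : ∑ i, t i = n + B) (h2 : ∑ i, (t i) ^ 2 = n + B ^ 2) :
    ∏ i, t i ≤ B := by
  have hBpos : (0:ℝ) < B := by linarith
  -- each entry is at most B
  have htB : ∀ j, t j ≤ B := by
    intro j
    have hcs := sq_sum_le_card_mul_sum_sq
      (s := Finset.univ.erase j) (f := t)
    have hcard : (Finset.univ.erase j).card = n := by
      rw [Finset.card_erase_of_mem (Finset.mem_univ j), Finset.card_univ,
        Fintype.card_fin]
      omega
    have he1 : ∑ i ∈ Finset.univ.erase j, t i = (n + B) - t j := by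
      have := Finset.add_sum_erase Finset.univ t (Finset.mem_univ j)
      rw [← h1]; linarith [this]
    have he2 : ∑ i ∈ Finset.univ.erase j, (t i) ^ 2 = (n + B ^ 2) - (t j) ^ 2 := by
      have h0 := Finset.add_sum_erase Finset.univ (fun i => (t i) ^ 2) (Finset.mem_univ j)
      have h0' : (t j) ^ 2 + ∑ x ∈ Finset.univ.erase j, (t x) ^ 2
          = ∑ x : Fin (n + 1), (t x) ^ 2 := h0
      rw [← h2]; linarith [h0']
    rw [he1, he2, hcard] at hcs
    have hn0 : (0:ℝ) ≤ (n:ℝ) := Nat.cast_nonneg n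
    by_contra hc
    push_neg at hc
    nlinarith [hcs, mul_nonneg hn0 (le_of_lt (sub_pos.2 hB)),
      mul_pos (sub_pos.2 hc) (sub_pos.2 hc),
      mul_nonneg (mul_nonneg hn0 (le_of_lt (sub_pos.2 hB))) (le_of_lt (sub_pos.2 hc))]
  by_cases hzero : ∃ i, t i = 0
  · obtain ⟨i, hi⟩ := hzero
    rw [Finset.prod_eq_zero (Finset.mem_univ i) hi]
    linarith
  push_neg at hzero
  have hpos : ∀ i, 0 < t i := fun i => lt_of_le_of_ne (ht i) (Ne.symm (hzero i))
  set γ := (Real.log B - B + 1) / (B - 1) ^ 2 with hγdef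
  have hlogsum : ∑ i, Real.log (t i) ≤ Real.log B := by
    have step1 : ∑ i, Real.log (t i) ≤ ∑ i, ((t i - 1) + γ * (t i - 1) ^ 2) :=
      Finset.sum_le_sum fun i _ => log_le_quad B hB (hpos i) (htB i)
    have step2 : ∑ i, ((t i - 1) + γ * (t i - 1) ^ 2)
        = ((∑ i, t i) - (n + 1)) + γ * ((∑ i, (t i) ^ 2) - 2 * (∑ i, t i) + (n + 1)) := by
      have expand : ∀ i : Fin (n + 1),
          (t i - 1) + γ * (t i - 1) ^ 2
            = (1 - 2 * γ) * t i + γ * (t i) ^ 2 + (γ - 1) := by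
        intro i; ring
      rw [Finset.sum_congr rfl (fun i _ => expand i)]
      rw [Finset.sum_add_distrib, Finset.sum_add_distrib, ← Finset.mul_sum,
        ← Finset.mul_sum, Finset.sum_const, Finset.card_univ, Fintype.card_fin,
        nsmul_eq_mul]
      push_cast
      ring
    have hval : ((∑ i, t i) - (n + 1)) + γ * ((∑ i, (t i) ^ 2) - 2 * (∑ i, t i) + (n + 1))
        = (B - 1) + γ * (B - 1) ^ 2 := by
      rw [h1, h2]; ring
    have hγB : γ * (B - 1) ^ 2 = Real.log B - B + 1 := by
      apply div_mul_cancel₀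
      have : (0:ℝ) < (B - 1) ^ 2 := by nlinarith
      exact ne_of_gt this
    calc ∑ i, Real.log (t i)
        ≤ ((∑ i, t i) - (n + 1)) + γ * ((∑ i, (t i) ^ 2) - 2 * (∑ i, t i) + (n + 1)) :=
          step1.trans (le_of_eq step2)
      _ = (B - 1) + γ * (B - 1) ^ 2 := hval
      _ = Real.log B := by linarith
  have hprod : ∏ i, t i = Real.exp (∑ i, Real.log (t i)) := by
    rw [Real.exp_sum]
    exact Finset.prod_congr rfl fun i _ => (Real.exp_log (hpos i)).symm
  rw [hprod]
  calc Real.exp (∑ i, Real.log (t i)) ≤ Real.exp (Real.log B) := Real.exp_le_exp.2 hlogsum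
    _ = B := Real.exp_log hBpos

theorem prod_le_of_two_moments (n : ℕ) (x y : Fin (n + 1) → ℝ) (a b : ℝ)
    (hx : ∀ i, 0 ≤ x i) (hy : ∀ i, 0 ≤ y i)
    (hsum : ∑ i, x i = ∑ i, y i)
    (hsumsq : ∑ i, (x i) ^ 2 = ∑ i, (y i) ^ 2)
    (hya : ∀ i, i ≠ Fin.last n → y i = a)
    (hyb : y (Fin.last n) = b)
    (hab : a ≤ b) :
    ∏ i, x i ≤ a ^ n * b := by
  classical
  have hcard : (Finset.univ.erase (Fin.last n)).card = n := by
    rw [Finset.card_erase_of_mem (Finset.mem_univ _), Finset.card_univ, Fintype.card_fin]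
    omega
  have hsy : ∑ i, y i = n * a + b := by
    have h := Finset.add_sum_erase Finset.univ y (Finset.mem_univ (Fin.last n))
    have herase : ∑ i ∈ Finset.univ.erase (Fin.last n), y i = n * a := by
      rw [Finset.sum_congr rfl (fun i hi => hya i (Finset.ne_of_mem_erase hi)),
        Finset.sum_const, hcard, nsmul_eq_mul]
    rw [← h, hyb, herase]; ring
  have hsy2 : ∑ i, (y i) ^ 2 = n * a ^ 2 + b ^ 2 := by
    have h := Finset.add_sum_erase Finset.univ (fun i => (y i) ^ 2)
      (Finset.mem_univ (Fin.last n))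
    have h' : (y (Fin.last n)) ^ 2 + ∑ i ∈ Finset.univ.erase (Fin.last n), (y i) ^ 2
        = ∑ i, (y i) ^ 2 := h
    have herase : ∑ i ∈ Finset.univ.erase (Fin.last n), (y i) ^ 2 = n * a ^ 2 := by
      rw [Finset.sum_congr rfl
        (fun i hi => by rw [hya i (Finset.ne_of_mem_erase hi)]),
        Finset.sum_const, hcard, nsmul_eq_mul]
    rw [← h', hyb, herase]; ring
  rcases Nat.eq_zero_or_pos n with hn | hn
  · subst hn
    have hsx : ∑ i, x i = b := by rw [hsum, hsy]; push_cast; ring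
    have hx0 : x 0 = b := by rw [← hsx]; exact (Fin.sum_univ_one x).symm
    have hp : ∏ i, x i = x 0 := Fin.prod_univ_one x
    rw [hp, hx0, pow_zero, one_mul]
  · have hlast0 : (0 : Fin (n + 1)) ≠ Fin.last n := by
      simp only [ne_eq, Fin.ext_iff, Fin.val_zero, Fin.val_last]
      omega
    have ha : 0 ≤ a := by rw [← hya 0 hlast0]; exact hy 0
    rcases eq_or_lt_of_le ha with ha0 | hapos
    · -- a = 0
      subst ha0
      have hsx : ∑ i, x i = b := by rw [hsum, hsy]; ring
      have hsx2 : ∑ i, (x i) ^ 2 = b ^ 2 := by rw [hsumsq, hsy2]; ring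
      rw [zero_pow (Nat.pos_iff_ne_zero.1 hn), zero_mul]
      by_contra hc
      push_neg at hc
      have hne : ∀ i, x i ≠ 0 := by
        intro i h0
        rw [Finset.prod_eq_zero (Finset.mem_univ i) h0] at hc
        exact lt_irrefl 0 hc
      have hxb : ∀ i, x i ≤ b := by
        intro i
        have := Finset.single_le_sum (fun j _ => hx j) (Finset.mem_univ i)
        rw [hsx] at this; exact this
      have hterm : ∑ i, x i * (b - x i) = 0 := by
        have he : ∑ i, x i * (b - x i) = b * (∑ i, x i) - ∑ i, (x i) ^ 2 := by
          rw [Finset.mul_sum, ← Finset.sum_sub_distrib]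
          exact Finset.sum_congr rfl fun i _ => by ring
        rw [he, hsx, hsx2]; ring
      have hall := (Finset.sum_eq_zero_iff_of_nonneg
        (fun i _ => mul_nonneg (hx i) (sub_nonneg.2 (hxb i)))).1 hterm
      have hxib : ∀ i : Fin (n + 1), x i = b := by
        intro i
        rcases mul_eq_zero.1 (hall i (Finset.mem_univ i)) with h | h
        · exact absurd h (hne i)
        · linarith
      have hs : ∑ i, x i = ((n : ℝ) + 1) * b := by
        rw [Finset.sum_congr rfl fun i _ => hxib i, Finset.sum_const,
          Finset.card_univ, Fintype.card_fin, nsmul_eq_mul]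
        push_cast; ring
      have hsum1 : b = ((n : ℝ) + 1) * b := hsx.symm.trans hs
      have hn' : (1 : ℝ) ≤ n := by exact_mod_cast hn
      have hb0 : b = 0 := by nlinarith [hsum1]
      exact hne 0 (by rw [hxib 0, hb0])
    · -- 0 < a
      rcases eq_or_lt_of_le hab with hab' | hab'
      · -- a = b
        subst hab'
        have hsx : ∑ i, x i = ((n : ℝ) + 1) * a := by rw [hsum, hsy]; ring
        have hsx2 : ∑ i, (x i) ^ 2 = ((n : ℝ) + 1) * a ^ 2 := by rw [hsumsq, hsy2]; ring
        have hvar : ∑ i, (x i - a) ^ 2 = 0 := by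
          have he : ∑ i, (x i - a) ^ 2
              = (∑ i, (x i) ^ 2) - 2 * a * (∑ i, x i) + ((n : ℝ) + 1) * a ^ 2 := by
            rw [Finset.sum_congr rfl
              (fun i _ => (by ring : (x i - a) ^ 2 = (x i) ^ 2 - 2 * a * x i + a ^ 2))]
            rw [Finset.sum_add_distrib, Finset.sum_sub_distrib, ← Finset.mul_sum,
              Finset.sum_const, Finset.card_univ, Fintype.card_fin, nsmul_eq_mul]
            push_cast; ring
          rw [he, hsx, hsx2]; ring
        have hxa : ∀ i : Fin (n + 1), x i = a := by
          intro i
          have h0 := (Finset.sum_eq_zero_iff_of_nonneg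
            (fun i _ => sq_nonneg (x i - a))).1 hvar i (Finset.mem_univ i)
          have := pow_eq_zero_iff (n := 2) (by norm_num) |>.1 h0
          linarith [sub_eq_zero.1 this]
        rw [Finset.prod_congr rfl fun i _ => hxa i, Finset.prod_const,
          Finset.card_univ, Fintype.card_fin, pow_succ]
      · -- a < b
        have hBgt : 1 < b / a := (one_lt_div hapos).2 hab'
        have h1t : ∑ i, x i / a = (n : ℝ) + b / a := by
          rw [← Finset.sum_div, hsum, hsy]
          field_simp
        have h2t : ∑ i, (x i / a) ^ 2 = (n : ℝ) + (b / a) ^ 2 := by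
          simp only [div_pow]
          rw [← Finset.sum_div, hsumsq, hsy2]
          field_simp
        have key := normalized_key n (b / a) hBgt (fun i => x i / a)
          (fun i => div_nonneg (hx i) hapos.le) h1t h2t
        have hp : ∏ i, (x i / a) = (∏ i, x i) / a ^ (n + 1) := by
          rw [Finset.prod_div_distrib, Finset.prod_const, Finset.card_univ,
            Fintype.card_fin]
        rw [hp, div_le_div_iff₀ (by positivity) hapos] at key
        have hfin : (∏ i, x i) * a ≤ (a ^ n * b) * a := by
          calc (∏ i, x i) * a ≤ b * a ^ (n + 1) := key
            _ = (a ^ n * b) * a := by ring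
        exact le_of_mul_le_mul_right hfin hapos
end

section
/- Let R be an n×n correlation matrix, r_2 = sqrt((∑_{i≠j} r_{ij}²)/(n(n-1))), and R̂ the matrix with unit diagonal and all off-diagonal entries equal to r_2. Then det R ≤ det R̂ = (1-r_2)^{n-1}(1+(n-1)r_2). -/
open Real

private lemma hasDerivAt_aux (x c : ℝ) {s : ℝ} (hs : 0 < s) :
    HasDerivAt (fun t : ℝ => Real.log x + (t - x) / x + c * (t - x) ^ 2 - Real.log t)
      (1 / x + c * (2 * (s - x)) - 1 / s) s := by
  have h1 : HasDerivAt (fun t : ℝ => t - x) 1 s := (hasDerivAt_id s).sub_const x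
  have h2 : HasDerivAt (fun t : ℝ => (t - x) / x) (1 / x) s := h1.div_const x
  have h3 : HasDerivAt (fun t : ℝ => (t - x) ^ 2) (2 * (s - x) ^ 1 * 1) s := h1.pow 2
  have h4 : HasDerivAt (fun t : ℝ => c * (t - x) ^ 2) (c * (2 * (s - x))) s := by
    simpa using h3.const_mul c
  have h5 : HasDerivAt (fun t : ℝ => Real.log t) s⁻¹ s := Real.hasDerivAt_log hs.ne'
  have := ((h2.const_add (Real.log x)).add h4).sub h5
  simp only [one_div] at this ⊢
  exact this

private lemma deriv_aux {x : ℝ} (hx : 0 < x) (c : ℝ) {s : ℝ} (hs : 0 < s) :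
    deriv (fun t : ℝ => Real.log x + (t - x) / x + c * (t - x) ^ 2 - Real.log t) s
      = (s - x) * (1 + 2 * c * x * s) / (x * s) := by
  rw [(hasDerivAt_aux x c hs).deriv]
  field_simp
  ring

private lemma key_ineq {x y c : ℝ} (hx : 0 < x) (hxy : x < y) (hc : c < 0)
    (hcx : 0 ≤ 1 + 2 * c * x ^ 2)
    (hy : Real.log y = Real.log x + (y - x) / x + c * (y - x) ^ 2) :
    ∀ t, 0 < t → t ≤ y → Real.log t ≤ Real.log x + (t - x) / x + c * (t - x) ^ 2 := by
  set h : ℝ → ℝ := fun t => Real.log x + (t - x) / x + c * (t - x) ^ 2 - Real.log t with hh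
  have hdiff : DifferentiableOn ℝ h (Set.Ioi 0) := fun s hs =>
    ((hasDerivAt_aux x c hs).differentiableAt).differentiableWithinAt
  have hcont : ContinuousOn h (Set.Ioi 0) := hdiff.continuousOn
  have hhx : h x = 0 := by simp [hh]
  have hhy : h y = 0 := by simp [hh, ← hy]
  suffices key : ∀ t, 0 < t → t ≤ y → 0 ≤ h t by
    intro t ht hty
    have := key t ht hty
    simp only [hh, sub_nonneg] at this
    linarith
  intro t ht hty
  rcases le_or_gt t x with htx | htx
  · have mono : AntitoneOn h (Set.Icc t x) := by
      refine antitoneOn_of_deriv_nonpos (convex_Icc _ _)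
        (hcont.mono fun s hs => lt_of_lt_of_le ht hs.1)
        (hdiff.mono ?_) ?_
      · rw [interior_Icc]
        exact fun s hs => lt_trans ht hs.1
      · rw [interior_Icc]
        intro s hs
        have hs0 : 0 < s := lt_trans ht hs.1
        rw [deriv_aux hx c hs0]
        apply div_nonpos_of_nonpos_of_nonneg
        · apply mul_nonpos_of_nonpos_of_nonneg
          · linarith [hs.2]
          · nlinarith [hs.2, hs0]
        · positivity
    have := mono (Set.left_mem_Icc.2 htx) (Set.right_mem_Icc.2 htx) htx
    linarith
  · rcases le_or_gt 0 (1 + 2 * c * x * t) with ht0 | ht0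
    · have mono : MonotoneOn h (Set.Icc x t) := by
        refine monotoneOn_of_deriv_nonneg (convex_Icc _ _)
          (hcont.mono fun s hs => lt_of_lt_of_le hx hs.1)
          (hdiff.mono ?_) ?_
        · rw [interior_Icc]
          exact fun s hs => lt_trans hx hs.1
        · rw [interior_Icc]
          intro s hs
          have hs0 : 0 < s := lt_trans hx hs.1
          rw [deriv_aux hx c hs0]
          apply div_nonneg
          · apply mul_nonneg
            · linarith [hs.1]
            · nlinarith [hs.2, ht]
          · positivity
      have := mono (Set.left_mem_Icc.2 htx.le) (Set.right_mem_Icc.2 htx.le) htx.le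
      linarith
    · have mono : AntitoneOn h (Set.Icc t y) := by
        refine antitoneOn_of_deriv_nonpos (convex_Icc _ _)
          (hcont.mono fun s hs => lt_of_lt_of_le ht hs.1)
          (hdiff.mono ?_) ?_
        · rw [interior_Icc]
          exact fun s hs => lt_trans ht hs.1
        · rw [interior_Icc]
          intro s hs
          have hs0 : 0 < s := lt_trans ht hs.1
          rw [deriv_aux hx c hs0]
          apply div_nonpos_of_nonpos_of_nonneg
          · apply mul_nonpos_of_nonneg_of_nonpos
            · linarith [hs.1]
            · nlinarith [hs.1, ht]
          · positivity
      have := mono (Set.left_mem_Icc.2 hty) (Set.right_mem_Icc.2 hty) hty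
      linarith

private lemma log_lower {s : ℝ} (hs : 0 < s) : s - s ^ 2 / 2 < Real.log (1 + s) := by
  have hmono : StrictMonoOn (fun u : ℝ => Real.log (1 + u) - u + u ^ 2 / 2) (Set.Ici 0) := by
    refine strictMonoOn_of_deriv_pos (convex_Ici _) ?_ ?_
    · apply ContinuousOn.add
      · apply ContinuousOn.sub
        · apply ContinuousOn.log (by fun_prop)
          intro u hu
          simp only [Set.mem_Ici] at hu
          linarith
        · fun_prop
      · fun_prop
    · intro u hu
      rw [interior_Ici] at hu
      simp only [Set.mem_Ioi] at hu
      have h1 : HasDerivAt (fun u : ℝ => Real.log (1 + u)) (1 / (1 + u)) u := by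
        simpa [Function.comp_def] using (Real.hasDerivAt_log (by linarith : (1:ℝ) + u ≠ 0)).comp u
          ((hasDerivAt_id u).const_add 1)
      have h2 : HasDerivAt (fun u : ℝ => Real.log (1 + u) - u + u ^ 2 / 2)
          (1 / (1 + u) - 1 + 2 * u ^ 1 / 2) u :=
        (h1.sub (hasDerivAt_id u)).add ((hasDerivAt_pow 2 u).div_const 2)
      rw [h2.deriv]
      have : 1 / (1 + u) - 1 + 2 * u ^ 1 / 2 = u ^ 2 / (1 + u) := by
        field_simp
        ring
      rw [this]
      positivity
  have := hmono (Set.self_mem_Ici) (Set.mem_Ici.2 hs.le) hs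
  simp only [add_zero, Real.log_one] at this
  linarith

set_option maxHeartbeats 1600000 in
private lemma prod_le_bound {n : ℕ} (hn : 2 ≤ n) (m : ℝ) (hm0 : 0 ≤ m) (l : Fin n → ℝ)
    (hnn : ∀ i, 0 ≤ l i) (hsum : ∑ i, l i = (n : ℝ))
    (hsq : ∑ i, (l i - 1) ^ 2 = (n : ℝ) * ((n : ℝ) - 1) * m ^ 2) :
    ∏ i, l i ≤ (1 - m) ^ (n - 1) * (1 + ((n : ℝ) - 1) * m) := by
  have hn1 : (1 : ℝ) ≤ (n : ℝ) := by exact_mod_cast Nat.one_le_of_lt hn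
  have hn2 : (2 : ℝ) ≤ (n : ℝ) := by exact_mod_cast hn
  have hnpos : (0 : ℝ) < n := by linarith
  -- each eigenvalue is at most n
  have hle_n : ∀ i, l i ≤ (n : ℝ) := by
    intro i
    rw [← hsum]
    exact Finset.single_le_sum (fun j _ => hnn j) (Finset.mem_univ i)
  -- expansion of sum of squares
  have hexpand : ∑ i, (l i - 1) ^ 2 = (∑ i, l i ^ 2) - 2 * (∑ i, l i) + n := by
    have : ∀ i : Fin n, (l i - 1) ^ 2 = l i ^ 2 - 2 * l i + 1 := fun i => by ring
    simp only [this, Finset.sum_add_distrib, Finset.sum_sub_distrib, ← Finset.mul_sum,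
      Finset.sum_const, Finset.card_univ, Fintype.card_fin, nsmul_eq_mul, mul_one]
  have hsumsq : ∑ i, l i ^ 2 = (n : ℝ) + (n : ℝ) * ((n : ℝ) - 1) * m ^ 2 := by
    rw [hexpand, hsum] at hsq; linarith
  -- m ≤ 1
  have hsqlen : ∑ i, l i ^ 2 ≤ (n : ℝ) * (n : ℝ) := by
    calc ∑ i, l i ^ 2 ≤ ∑ i, (n : ℝ) * l i := by
          refine Finset.sum_le_sum fun i _ => ?_
          have := hle_n i; have := hnn i; nlinarith
      _ = (n : ℝ) * (n : ℝ) := by rw [← Finset.mul_sum, hsum]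
  have hmsq : m ^ 2 ≤ 1 := by
    have h1 : (n : ℝ) * ((n : ℝ) - 1) * m ^ 2 ≤ (n : ℝ) * ((n : ℝ) - 1) := by nlinarith
    have h2 : (0 : ℝ) < (n : ℝ) * ((n : ℝ) - 1) := by nlinarith
    nlinarith
  have hm1 : m ≤ 1 := by nlinarith [sq_nonneg (m - 1)]
  -- bound RHS nonneg
  have hrhs0 : (0 : ℝ) ≤ (1 - m) ^ (n - 1) * (1 + ((n : ℝ) - 1) * m) := by
    apply mul_nonneg (pow_nonneg (by linarith) _) (by nlinarith)
  -- case: some eigenvalue vanishes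
  by_cases hzero : ∃ i, l i = 0
  · obtain ⟨i, hi⟩ := hzero
    rw [Finset.prod_eq_zero (Finset.mem_univ i) hi]
    exact hrhs0
  push_neg at hzero
  have hpos : ∀ i, 0 < l i := fun i => (hnn i).lt_of_ne' (hzero i)
  rcases eq_or_lt_of_le hm0 with rfl | hm0'
  · -- m = 0 : all eigenvalues equal 1
    have hall : ∀ i ∈ Finset.univ, (l i - 1) ^ 2 = 0 := by
      rw [← Finset.sum_eq_zero_iff_of_nonneg (fun i _ => sq_nonneg _)]
      rw [hsq]; ring
    have : ∏ i, l i = 1 := Finset.prod_eq_one fun i _ => by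
      have := hall i (Finset.mem_univ i); nlinarith [sq_nonneg (l i - 1)]
    rw [this]; simp
  rcases eq_or_lt_of_le hm1 with rfl | hm1'
  · -- m = 1 : impossible when all eigenvalues positive
    exfalso
    have hprod0 : ∑ i, l i * ((n : ℝ) - l i) = 0 := by
      have : ∀ i : Fin n, l i * ((n : ℝ) - l i) = (n : ℝ) * l i - l i ^ 2 := fun i => by ring
      simp only [this, Finset.sum_sub_distrib, ← Finset.mul_sum, hsum, hsumsq]
      ring
    have hall : ∀ i ∈ Finset.univ, l i * ((n : ℝ) - l i) = 0 := by
      rw [← Finset.sum_eq_zero_iff_of_nonneg (fun i _ => mul_nonneg (hnn i) (by linarith [hle_n i]))]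
      exact hprod0
    have : ∀ i : Fin n, l i = (n : ℝ) := by
      intro i
      have := hall i (Finset.mem_univ i)
      rcases mul_eq_zero.1 this with h | h
      · exact absurd h (hzero i)
      · linarith
    have : ∑ i, l i = (n : ℝ) * (n : ℝ) := by
      simp only [this, Finset.sum_const, Finset.card_univ, Fintype.card_fin, nsmul_eq_mul]
    rw [hsum] at this
    nlinarith
  -- main case : 0 < m < 1
  set x : ℝ := 1 - m with hxdef
  set y : ℝ := 1 + ((n : ℝ) - 1) * m with hydef
  have hx : 0 < x := by simp [hxdef]; linarith
  have hy0 : 0 < y := by simp [hydef]; nlinarith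
  have hxy : x < y := by simp [hxdef, hydef]; nlinarith
  have hyx : y - x = (n : ℝ) * m := by simp [hxdef, hydef]; ring
  clear_value x y
  -- each eigenvalue is at most y
  have hle_y : ∀ i, l i ≤ y := by
    intro i
    have herase : ∑ j ∈ Finset.univ.erase i, (l j - 1) = -(l i - 1) := by
      have h0 : ∑ j, (l j - 1) = 0 := by
        simp only [Finset.sum_sub_distrib, hsum, Finset.sum_const, Finset.card_univ,
          Fintype.card_fin, nsmul_eq_mul, mul_one]; ring
      have h2 := Finset.add_sum_erase Finset.univ (fun j => l j - 1) (Finset.mem_univ i)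
      linarith [h0, h2]
    have hcard : ((Finset.univ.erase i).card : ℝ) = (n : ℝ) - 1 := by
      rw [Finset.card_erase_of_mem (Finset.mem_univ i), Finset.card_univ, Fintype.card_fin]
      have : (1:ℕ) ≤ n := Nat.one_le_of_lt hn
      push_cast [Nat.cast_sub this]
      ring
    have hcs := sq_sum_le_card_mul_sum_sq (s := Finset.univ.erase i) (f := fun j => l j - 1)
    rw [herase, hcard] at hcs
    have hsplit : ∑ j ∈ Finset.univ.erase i, (l j - 1) ^ 2
        = (n : ℝ) * ((n : ℝ) - 1) * m ^ 2 - (l i - 1) ^ 2 := by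
      have h2 := Finset.add_sum_erase Finset.univ (fun j => (l j - 1) ^ 2) (Finset.mem_univ i)
      rw [hsq] at h2
      linarith
    rw [hsplit] at hcs
    simp only [neg_sq] at hcs
    have hBpos : (0:ℝ) < 1 + ((n:ℝ) - 1) := by linarith
    have h3 : (l i - 1) ^ 2 * (1 + ((n:ℝ) - 1))
        ≤ (((n:ℝ) - 1) * m) ^ 2 * (1 + ((n:ℝ) - 1)) := by linarith [hcs]
    have hsqle : (l i - 1) ^ 2 ≤ (((n : ℝ) - 1) * m) ^ 2 := le_of_mul_le_mul_right h3 hBpos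
    have hb : 0 ≤ ((n : ℝ) - 1) * m := mul_nonneg (by linarith) hm0
    have := (abs_le_of_sq_le_sq' hsqle hb).2
    simp only [hydef]
    linarith
  -- set up the quadratic upper bound on log
  set c : ℝ := (Real.log y - Real.log x - (y - x) / x) / (y - x) ^ 2 with hcdef
  clear_value c
  have hyx0 : 0 < y - x := by linarith
  have hyxne : (y - x) ^ 2 ≠ 0 := by positivity
  have hyeq : Real.log y = Real.log x + (y - x) / x + c * (y - x) ^ 2 := by
    rw [hcdef, div_mul_cancel₀ _ hyxne]; ring
  have hlogdiv : Real.log (y / x) = Real.log y - Real.log x :=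
    Real.log_div (ne_of_gt hy0) (ne_of_gt hx)
  have hdivgt : (1:ℝ) < y / x := (one_lt_div hx).2 hxy
  have hc : c < 0 := by
    rw [hcdef]
    apply div_neg_of_neg_of_pos _ (by positivity)
    have h1 := Real.log_lt_sub_one_of_pos (by positivity : 0 < y / x) (ne_of_gt hdivgt)
    rw [hlogdiv] at h1
    have h2 : y / x - 1 = (y - x) / x := by field_simp
    rw [h2] at h1
    linarith
  have hcx : 0 ≤ 1 + 2 * c * x ^ 2 := by
    have hspos : 0 < (y - x) / x := by positivity
    have hlow := log_lower hspos
    have h1x : 1 + (y - x) / x = y / x := by field_simp; ring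
    rw [h1x, hlogdiv] at hlow
    have hxs2 : x ^ 2 * ((y - x) / x) ^ 2 = (y - x) ^ 2 := by
      rw [← mul_pow, mul_div_cancel₀ _ (ne_of_gt hx)]
    have hc2 : c * (y - x) ^ 2 = Real.log y - Real.log x - (y - x) / x := by
      rw [hcdef, div_mul_cancel₀ _ hyxne]
    have t1 : -(((y - x) / x) ^ 2 / 2) ≤ Real.log y - Real.log x - (y - x) / x := by
      linarith
    have t2 := mul_le_mul_of_nonneg_left t1 (by positivity : (0:ℝ) ≤ 2 * x ^ 2)
    have t3 : 2 * x ^ 2 * (-(((y - x) / x) ^ 2 / 2)) = -((y - x) ^ 2) := by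
      rw [← hxs2]; ring
    have h5 : -((y - x) ^ 2) ≤ 2 * x ^ 2 * (Real.log y - Real.log x - (y - x) / x) := by
      linarith [t2, t3]
    have h6 : 0 ≤ (1 + 2 * c * x ^ 2) * (y - x) ^ 2 := by
      have t4 : (1 + 2 * c * x ^ 2) * (y - x) ^ 2
          = (y - x) ^ 2 + 2 * x ^ 2 * (c * (y - x) ^ 2) := by ring
      rw [t4, hc2]
      linarith [h5]
    have hypos : (0:ℝ) < (y - x) ^ 2 := by positivity
    exact le_of_mul_le_mul_right (by linarith [h6] : 0 * (y - x) ^ 2 ≤ (1 + 2 * c * x ^ 2) * (y - x) ^ 2) hypos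
  have hkey := key_ineq hx hxy hc hcx hyeq
  -- sum manipulations
  have e1 : ∑ i, (l i - x) = (n : ℝ) * m := by
    simp only [Finset.sum_sub_distrib, hsum, Finset.sum_const, Finset.card_univ,
      Fintype.card_fin, nsmul_eq_mul, mul_one, hxdef]
    ring
  have e2 : ∑ i, (l i - x) ^ 2 = ((n : ℝ) * m) ^ 2 := by
    have h : ∀ i : Fin n, (l i - x) ^ 2 = l i ^ 2 - 2 * x * l i + x ^ 2 := fun i => by ring
    rw [Finset.sum_congr rfl fun i _ => h i, Finset.sum_add_distrib, Finset.sum_sub_distrib,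
      ← Finset.mul_sum, Finset.sum_const, Finset.card_univ, Fintype.card_fin, nsmul_eq_mul,
      hsum, hsumsq, hxdef]
    ring
  have big : ∑ i, Real.log (l i)
      ≤ (n : ℝ) * Real.log x + ((n : ℝ) * m) / x + c * ((n : ℝ) * m) ^ 2 := by
    calc ∑ i, Real.log (l i)
        ≤ ∑ i, (Real.log x + (l i - x) / x + c * (l i - x) ^ 2) :=
          Finset.sum_le_sum fun i _ => hkey (l i) (hpos i) (hle_y i)
      _ = (n : ℝ) * Real.log x + ((n : ℝ) * m) / x + c * ((n : ℝ) * m) ^ 2 := by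
          rw [Finset.sum_add_distrib, Finset.sum_add_distrib, ← Finset.sum_div, e1,
            ← Finset.mul_sum, e2, Finset.sum_const, Finset.card_univ, Fintype.card_fin,
            nsmul_eq_mul]
  have hyeq2 : Real.log y = Real.log x + ((n : ℝ) * m) / x + c * ((n : ℝ) * m) ^ 2 := by
    rw [hyeq, hyx]
  have final_log : ∑ i, Real.log (l i) ≤ ((n : ℝ) - 1) * Real.log x + Real.log y := by
    nlinarith [big, hyeq2]
  have hprodpos : 0 < ∏ i, l i := Finset.prod_pos fun i _ => hpos i
  have hrhspos : 0 < x ^ (n - 1) * y := by positivity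
  have hcast : ((n - 1 : ℕ) : ℝ) = (n : ℝ) - 1 := by
    have h1 : (1:ℕ) ≤ n := Nat.one_le_of_lt hn
    push_cast [Nat.cast_sub h1]
    ring
  refine (Real.log_le_log_iff hprodpos hrhspos).1 ?_
  rw [Real.log_prod fun i _ => (hpos i).ne',
    Real.log_mul (by positivity) (ne_of_gt hy0), Real.log_pow, hcast]
  exact final_log

private lemma trace_eq_sum_eigen {n : ℕ} {R : Matrix (Fin n) (Fin n) ℝ} (hR : R.IsHermitian) :
    R.trace = ∑ i, hR.eigenvalues i := by
  set U : Matrix (Fin n) (Fin n) ℝ := (Matrix.IsHermitian.eigenvectorUnitary hR : Matrix (Fin n) (Fin n) ℝ) with hU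
  have hUU : star U * U = 1 := by
    exact (Matrix.mem_unitaryGroup_iff').mp (Matrix.IsHermitian.eigenvectorUnitary hR).2
  calc R.trace = (U * Matrix.diagonal (RCLike.ofReal ∘ hR.eigenvalues) * star U).trace := by
        have h := hR.spectral_theorem
        rw [Unitary.conjStarAlgAut_apply] at h
        rw [← h]
    _ = (star U * U * Matrix.diagonal (RCLike.ofReal ∘ hR.eigenvalues)).trace := by
        rw [Matrix.trace_mul_cycle]
    _ = ∑ i, hR.eigenvalues i := by
        rw [hUU, one_mul, Matrix.trace_diagonal]
        simp

private lemma trace_sq_eq_sum_eigen_sq {n : ℕ} {R : Matrix (Fin n) (Fin n) ℝ}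
    (hR : R.IsHermitian) : (R * R).trace = ∑ i, hR.eigenvalues i ^ 2 := by
  set U : Matrix (Fin n) (Fin n) ℝ := (Matrix.IsHermitian.eigenvectorUnitary hR : Matrix (Fin n) (Fin n) ℝ) with hU
  set D : Matrix (Fin n) (Fin n) ℝ := Matrix.diagonal (RCLike.ofReal ∘ hR.eigenvalues) with hD
  have hUU : star U * U = 1 := by
    exact (Matrix.mem_unitaryGroup_iff').mp (Matrix.IsHermitian.eigenvectorUnitary hR).2
  have h := hR.spectral_theorem
  rw [Unitary.conjStarAlgAut_apply] at h
  calc (R * R).trace = (U * D * star U * (U * D * star U)).trace := by rw [← h]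
    _ = (U * (D * (star U * U) * D) * star U).trace := by
        simp only [Matrix.mul_assoc]
    _ = (star U * (U * (D * (star U * U) * D))).trace := by rw [Matrix.trace_mul_comm]
    _ = (D * D).trace := by
        rw [hUU, Matrix.mul_one, ← Matrix.mul_assoc, hUU, one_mul]
    _ = ∑ i, hR.eigenvalues i ^ 2 := by
        rw [hD, Matrix.diagonal_mul_diagonal, Matrix.trace_diagonal]
        simp [sq]

private lemma det_Rhat_eq {n : ℕ} (hn : 2 ≤ n) (r : ℝ) :
    (Matrix.of fun i j : Fin n => if i = j then (1:ℝ) else r).det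
      = (1 - r) ^ (n - 1) * (1 + ((n:ℝ) - 1) * r) := by
  rcases eq_or_ne r 1 with rfl | hr
  · have h0 : (⟨0, by omega⟩ : Fin n) ≠ (⟨1, by omega⟩ : Fin n) := by
      intro h
      simpa using congrArg Fin.val h
    rw [Matrix.det_zero_of_row_eq h0 (by funext j; simp)]
    have h1 : 1 ≤ n - 1 := by omega
    rw [sub_self, zero_pow (by omega : n - 1 ≠ 0)]
    ring
  · have hne : (1 : ℝ) - r ≠ 0 := sub_ne_zero.2 (Ne.symm hr)
    have hsplit : (Matrix.of fun i j : Fin n => if i = j then (1:ℝ) else r)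
        = (1 - r) • (1 : Matrix (Fin n) (Fin n) ℝ)
          + Matrix.replicateCol Unit (fun _ => (1:ℝ)) * Matrix.replicateRow Unit (fun _ => r) := by
      ext i j
      by_cases h : i = j <;>
        simp [h, Matrix.one_apply, Matrix.mul_apply]
    have hdetA : ((1 - r) • (1 : Matrix (Fin n) (Fin n) ℝ)).det = (1 - r) ^ n := by
      rw [Matrix.det_smul, Matrix.det_one, mul_one, Fintype.card_fin]
    have hinv : ((1 - r) • (1 : Matrix (Fin n) (Fin n) ℝ))⁻¹
        = (1 - r)⁻¹ • (1 : Matrix (Fin n) (Fin n) ℝ) := by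
      apply Matrix.inv_eq_right_inv
      rw [Matrix.smul_mul, Matrix.mul_smul, Matrix.one_mul, smul_smul, mul_inv_cancel₀ hne,
        one_smul]
    have hunit : IsUnit ((1 - r) • (1 : Matrix (Fin n) (Fin n) ℝ)).det := by
      rw [hdetA]; exact (isUnit_iff_ne_zero.2 (pow_ne_zero _ hne))
    rw [hsplit, Matrix.det_add_replicateCol_mul_replicateRow hunit, hdetA, hinv, Matrix.det_unique]
    simp only [Matrix.add_apply, Matrix.one_apply_eq, Matrix.mul_apply, Matrix.replicateRow_apply,
      Matrix.replicateCol_apply, Matrix.smul_apply, Matrix.one_apply, smul_eq_mul, mul_one, mul_ite,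
      mul_zero, Finset.sum_ite_eq, Finset.sum_ite_eq', Finset.mem_univ, if_true,
      Finset.sum_const, Finset.card_univ, Fintype.card_fin, nsmul_eq_mul]
    have hpow : (1 - r) ^ n = (1 - r) ^ (n - 1) * (1 - r) := by
      rw [← pow_succ]; congr 1; omega
    rw [hpow]
    field_simp
    ring

theorem det_le_det_Rhat (n : ℕ) (hn : 2 ≤ n) (R : Matrix (Fin n) (Fin n) ℝ)
    (hpsd : R.PosSemidef) (hdiag : ∀ i, R i i = 1)
    (r₂ : ℝ)
    (hr₂ : r₂ = Real.sqrt ((∑ i, ∑ j ∈ Finset.univ.erase i, (R i j) ^ 2) / (n * (n - 1))))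
    (Rhat : Matrix (Fin n) (Fin n) ℝ)
    (hRhat : Rhat = Matrix.of fun i j => if i = j then 1 else r₂) :
    R.det ≤ Rhat.det ∧ Rhat.det = (1 - r₂) ^ (n - 1) * (1 + (n - 1 : ℝ) * r₂) := by
  have hR : R.IsHermitian := hpsd.1
  have hn1 : (1:ℝ) ≤ (n:ℝ) := by exact_mod_cast Nat.one_le_of_lt hn
  have hn2 : (2:ℝ) ≤ (n:ℝ) := by exact_mod_cast hn
  set S : ℝ := ∑ i, ∑ j ∈ Finset.univ.erase i, (R i j) ^ 2 with hSdef
  have hS0 : 0 ≤ S :=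
    Finset.sum_nonneg fun i _ => Finset.sum_nonneg fun j _ => sq_nonneg _
  have hnn : (0:ℝ) < (n:ℝ) * ((n:ℝ) - 1) := by nlinarith
  have hr0 : 0 ≤ r₂ := hr₂ ▸ Real.sqrt_nonneg _
  have hrsq : r₂ ^ 2 = S / ((n:ℝ) * ((n:ℝ) - 1)) := by
    rw [hr₂, Real.sq_sqrt (div_nonneg hS0 hnn.le)]
  have hSr : S = (n:ℝ) * ((n:ℝ) - 1) * r₂ ^ 2 := by
    rw [hrsq]; field_simp [show (n:ℝ) - 1 ≠ 0 by linarith]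
  -- symmetry of entries
  have hsymm : ∀ i j, R j i = R i j := fun i j => by
    conv_rhs => rw [← hR]
    simp [Matrix.conjTranspose_apply]
  -- traces
  have htr : R.trace = (n:ℝ) := by
    simp [Matrix.trace, Matrix.diag, hdiag]
  have htr2 : (R * R).trace = (n:ℝ) + S := by
    have h1 : (R * R).trace = ∑ i, ∑ j, R i j * R j i := by
      simp [Matrix.trace, Matrix.diag, Matrix.mul_apply]
    have h2 : ∀ i : Fin n, ∑ j, R i j * R j i = 1 + ∑ j ∈ Finset.univ.erase i, (R i j) ^ 2 := by
      intro i
      have h3 : ∀ j, R i j * R j i = (R i j) ^ 2 := fun j => by rw [hsymm i j]; ring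
      rw [Finset.sum_congr rfl fun j _ => h3 j]
      have h4 := Finset.add_sum_erase Finset.univ (fun j => (R i j) ^ 2) (Finset.mem_univ i)
      rw [← h4, hdiag i, one_pow]
    rw [h1, Finset.sum_congr rfl fun i _ => h2 i, Finset.sum_add_distrib, Finset.sum_const,
      Finset.card_univ, Fintype.card_fin, nsmul_eq_mul, mul_one, hSdef]
  -- eigenvalue facts
  have hsum : ∑ i, hR.eigenvalues i = (n:ℝ) := by
    rw [← trace_eq_sum_eigen hR, htr]
  have hsumsq : ∑ i, hR.eigenvalues i ^ 2 = (n:ℝ) + S := by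
    rw [← trace_sq_eq_sum_eigen_sq hR, htr2]
  have hsqd : ∑ i, (hR.eigenvalues i - 1) ^ 2 = (n:ℝ) * ((n:ℝ) - 1) * r₂ ^ 2 := by
    have h : ∀ i : Fin n, (hR.eigenvalues i - 1) ^ 2
        = hR.eigenvalues i ^ 2 - 2 * hR.eigenvalues i + 1 := fun i => by ring
    rw [Finset.sum_congr rfl fun i _ => h i, Finset.sum_add_distrib, Finset.sum_sub_distrib,
      hsumsq, ← Finset.mul_sum, hsum, Finset.sum_const, Finset.card_univ, Fintype.card_fin,
      nsmul_eq_mul, mul_one, hSr]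
    ring
  have hmain := prod_le_bound hn r₂ hr0 hR.eigenvalues
    (fun i => hpsd.eigenvalues_nonneg i) hsum hsqd
  have hdet : R.det = ∏ i, hR.eigenvalues i := by
    simpa using hR.det_eq_prod_eigenvalues
  have hdetRhat : Rhat.det = (1 - r₂) ^ (n - 1) * (1 + ((n:ℝ) - 1) * r₂) := by
    rw [hRhat]
    exact det_Rhat_eq hn r₂
  refine ⟨?_, hdetRhat⟩
  rw [hdet, hdetRhat]
  exact hmain
end

section
/- Let R be an n×n correlation matrix, r_2 = sqrt((∑_{i≠j} r_{ij}²)/(n(n-1))), and R̄ the matrix with unit diagonal and all off-diagonal entries equal to -r_2. Then det R̄ ≤ det R. -/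
set_option maxHeartbeats 1600000

open Matrix BigOperators

lemma log_quad_minorant (a b : ℝ) (hb : 0 < b) (hba : b < a) (x : ℝ) (hx : b ≤ x) :
    Real.log a + (x - a)/a - ((Real.log a + (b - a)/a - Real.log b)/(a - b)^2) * (x - a)^2
      ≤ Real.log x := by
  have ha : 0 < a := hb.trans hba
  set c : ℝ := (Real.log a + (b - a)/a - Real.log b)/(a - b)^2 with hcdef
  have hab2 : (0:ℝ) < (a - b)^2 := pow_pos (sub_pos.2 hba) 2
  have hc : 0 < c := by
    apply div_pos _ hab2
    have h1 : Real.log (b/a) < b/a - 1 :=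
      Real.log_lt_sub_one_of_pos (by positivity) (by
        intro h
        have : b = a := by field_simp at h; linarith
        exact absurd this (ne_of_lt hba))
    rw [Real.log_div (ne_of_gt hb) (ne_of_gt ha)] at h1
    have : (b - a)/a = b/a - 1 := by field_simp
    linarith
  set h : ℝ → ℝ := fun x => Real.log x - Real.log a - (x - a)/a + c * (x - a)^2 with hhdef
  have hd : ∀ t : ℝ, 0 < t → HasDerivAt h ((a - t) * (1/(a*t) - 2*c)) t := by
    intro t ht
    have h1 : HasDerivAt h (t⁻¹ - a⁻¹ + c * (2 * (t - a))) t := by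
      have := ((Real.hasDerivAt_log (ne_of_gt ht)).sub_const (Real.log a)).sub
        (((hasDerivAt_id t).sub_const a).div_const a)
      have h2 := (((hasDerivAt_id t).sub_const a).pow 2).const_mul c
      rw [hhdef]
      exact (this.add h2).congr_deriv (by norm_num [one_div])
    convert h1 using 1
    have : t ≠ 0 := ne_of_gt ht
    have : a ≠ 0 := ne_of_gt ha
    field_simp
    ring
  have hcont : ∀ s : Set ℝ, s ⊆ Set.Ioi (0:ℝ) → ContinuousOn h s := by
    intro s hs
    exact fun t hts => ((hd t (hs hts)).continuousAt.continuousWithinAt)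
  have hderiv : ∀ t : ℝ, 0 < t → deriv h t = (a - t) * (1/(a*t) - 2*c) :=
    fun t ht => (hd t ht).deriv
  have hha : h a = 0 := by simp [hhdef]
  have hhb : h b = 0 := by
    have : c * (b - a)^2 = Real.log a + (b - a)/a - Real.log b := by
      rw [hcdef]
      have hba2 : (b - a)^2 ≠ 0 := pow_ne_zero _ (sub_ne_zero.2 (ne_of_lt hba))
      rw [show (a - b)^2 = (b - a)^2 by ring, div_mul_eq_mul_div, mul_div_assoc, div_self hba2, mul_one]
    simp only [hhdef]
    linarith
  -- Step A : 1 ≤ 2 * c * a^2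
  have hA : 1 ≤ 2 * c * a^2 := by
    by_contra hlt
    push_neg at hlt
    have hmono : StrictMonoOn h (Set.Icc b a) := by
      apply strictMonoOn_of_deriv_pos (convex_Icc b a)
        (hcont _ (fun t ht => lt_of_lt_of_le hb ht.1))
      intro t ht
      rw [interior_Icc] at ht
      have ht0 : 0 < t := hb.trans ht.1
      rw [hderiv t ht0]
      apply mul_pos (by linarith [ht.2])
      rw [sub_pos]
      have h1 : a * t < a * a := by nlinarith [ht.2]
      have h2 : 2 * c < 1/a^2 := by
        rw [lt_div_iff₀ (by positivity)]; linarith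
      calc 2*c < 1/a^2 := h2
        _ ≤ 1/(a*t) := by
            apply one_div_le_one_div_of_le (by positivity)
            nlinarith [ht.2]
    have := hmono (Set.left_mem_Icc.2 (le_of_lt hba)) (Set.right_mem_Icc.2 (le_of_lt hba)) hba
    rw [hha, hhb] at this
    exact lt_irrefl 0 this
  -- conclude 0 ≤ h x
  have hmain : 0 ≤ h x := by
    rcases le_total x a with hxa | hax
    · rcases le_total x (1/(2*c*a)) with hxm | hmx
      · -- monotone on [b, x]
        have hmono : MonotoneOn h (Set.Icc b x) := by
          apply monotoneOn_of_deriv_nonneg (convex_Icc b x)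
            (hcont _ (fun t ht => lt_of_lt_of_le hb ht.1))
            (fun t ht => ((hd t (by rw [interior_Icc] at ht; exact hb.trans ht.1)).differentiableAt.differentiableWithinAt))
          intro t ht
          rw [interior_Icc] at ht
          have ht0 : 0 < t := hb.trans ht.1
          rw [hderiv t ht0]
          apply mul_nonneg (by linarith [ht.2, hxa])
          rw [sub_nonneg]
          have htm : t < 1/(2*c*a) := lt_of_lt_of_le ht.2 hxm
          rw [le_div_iff₀ (by positivity)]
          have : 2*c*a*t < 1 := by
            have := (lt_div_iff₀ (by positivity : (0:ℝ) < 2*c*a)).1 (by linarith : t < 1/(2*c*a))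
            linarith [this]
          linarith
        have := hmono (Set.left_mem_Icc.2 hx) (Set.right_mem_Icc.2 hx) hx
        rw [hhb] at this; exact this
      · -- antitone on [x, a]
        have hanti : AntitoneOn h (Set.Icc x a) := by
          apply antitoneOn_of_deriv_nonpos (convex_Icc x a)
            (hcont _ (fun t ht => lt_of_lt_of_le (hb.trans_le hx) ht.1))
            (fun t ht => ((hd t (by rw [interior_Icc] at ht; exact (hb.trans_le hx).trans ht.1)).differentiableAt.differentiableWithinAt))
          intro t ht
          rw [interior_Icc] at ht
          have ht0 : 0 < t := (hb.trans_le hx).trans ht.1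
          rw [hderiv t ht0]
          apply mul_nonpos_of_nonneg_of_nonpos (by linarith [ht.2])
          rw [sub_nonpos]
          have htm : 1/(2*c*a) < t := lt_of_le_of_lt hmx ht.1
          rw [div_le_iff₀ (by positivity)]
          have h1 : 1 < 2*c*a*t := by
            have := (div_lt_iff₀ (by positivity : (0:ℝ) < 2*c*a)).1 htm
            linarith
          linarith
        have := hanti (Set.left_mem_Icc.2 hxa) (Set.right_mem_Icc.2 hxa) hxa
        rw [hha] at this; exact this
    · -- monotone on [a, x]
      have hmono : MonotoneOn h (Set.Icc a x) := by
        apply monotoneOn_of_deriv_nonneg (convex_Icc a x)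
          (hcont _ (fun t ht => lt_of_lt_of_le ha ht.1))
          (fun t ht => ((hd t (by rw [interior_Icc] at ht; exact ha.trans ht.1)).differentiableAt.differentiableWithinAt))
        intro t ht
        rw [interior_Icc] at ht
        have ht0 : 0 < t := ha.trans ht.1
        rw [hderiv t ht0]
        have hfac : 1/(a*t) - 2*c ≤ 0 := by
          rw [sub_nonpos]
          have h1 : 1/(a*t) ≤ 1/a^2 := by
            apply one_div_le_one_div_of_le (by positivity)
            nlinarith [ht.1]
          have h2 : 1/a^2 ≤ 2*c := by
            rw [div_le_iff₀ (by positivity)]; linarith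
          linarith
        nlinarith [ht.1, hfac]
      have := hmono (Set.left_mem_Icc.2 hax) (Set.right_mem_Icc.2 hax) hax
      rw [hha] at this; exact this
  have : Real.log x - Real.log a - (x - a)/a + c * (x - a)^2 = h x := rfl
  linarith [hmain, this ▸ hmain]

/-- trace facts for a real symmetric matrix -/
lemma trace_eig (n : ℕ) (R : Matrix (Fin n) (Fin n) ℝ) (hH : R.IsHermitian) :
    R.trace = ∑ i, hH.eigenvalues i ∧ (R * R).trace = ∑ i, (hH.eigenvalues i)^2 := by
  set U : Matrix (Fin n) (Fin n) ℝ := (hH.eigenvectorUnitary : Matrix (Fin n) (Fin n) ℝ) with hUdef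
  have hU : star U * U = 1 := Matrix.mem_unitaryGroup_iff'.mp hH.eigenvectorUnitary.2
  have hD : (RCLike.ofReal ∘ hH.eigenvalues : Fin n → ℝ) = hH.eigenvalues := by
    funext i; simp [RCLike.ofReal_real_eq_id]
  have hsp : R = U * Matrix.diagonal hH.eigenvalues * star U := by
    have := hH.spectral_theorem
    rwa [hD] at this
  set D : Matrix (Fin n) (Fin n) ℝ := Matrix.diagonal hH.eigenvalues with hDdef
  constructor
  · conv_lhs => rw [hsp]
    rw [Matrix.trace_mul_cycle, hU, one_mul, Matrix.trace_diagonal]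
  · have h2 : R * R = U * (D * D) * star U := by
      rw [hsp]
      calc U * D * star U * (U * D * star U)
          = U * D * ((star U * U) * (D * star U)) := by simp only [mul_assoc]
        _ = U * (D * D) * star U := by rw [hU, one_mul]; simp only [mul_assoc]
    rw [h2, Matrix.trace_mul_cycle, hU, one_mul, hDdef,
      Matrix.diagonal_mul_diagonal, Matrix.trace_diagonal]
    simp [pow_two]

theorem det_Rbar_le_det (n : ℕ) (hn : 2 ≤ n) (R : Matrix (Fin n) (Fin n) ℝ)
    (hpsd : R.PosSemidef) (hdiag : ∀ i, R i i = 1)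
    (r₂ : ℝ)
    (hr₂ : r₂ = Real.sqrt ((∑ i, ∑ j ∈ Finset.univ.erase i, (R i j) ^ 2) / (n * (n - 1))))
    (Rbar : Matrix (Fin n) (Fin n) ℝ)
    (hRbar : Rbar = Matrix.of fun i j => if i = j then 1 else -r₂) :
    Rbar.det ≤ R.det := by
  classical
  have hH : R.IsHermitian := hpsd.1
  set μ : Fin n → ℝ := hH.eigenvalues with hμdef
  have hμnn : ∀ i, 0 ≤ μ i := fun i => hpsd.eigenvalues_nonneg i
  have hN2 : (2:ℝ) ≤ (n:ℝ) := by exact_mod_cast hn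
  set N : ℝ := (n:ℝ) with hNdef
  set S : ℝ := ∑ i, ∑ j ∈ Finset.univ.erase i, (R i j) ^ 2 with hSdef
  have hSnn : 0 ≤ S := Finset.sum_nonneg fun i _ =>
    Finset.sum_nonneg fun j _ => sq_nonneg _
  have hr₂0 : 0 ≤ r₂ := hr₂ ▸ Real.sqrt_nonneg _
  have hS : S = N * (N - 1) * r₂^2 := by
    have hpos : (0:ℝ) < N * (N - 1) := by nlinarith
    have : r₂^2 = S / (N * (N - 1)) := by
      rw [hr₂, Real.sq_sqrt (div_nonneg hSnn hpos.le)]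
    rw [this, mul_div_assoc', eq_div_iff hpos.ne']
    ring
  set a : ℝ := 1 + r₂ with hadef
  set b : ℝ := 1 - (N - 1) * r₂ with hbdef
  have ha : 0 < a := by simp only [hadef]; linarith
  -- determinant of Rbar
  have hdetRbar : Rbar.det = a^(n-1) * b := by
    have hRbar2 : Rbar = a • (1 + Matrix.replicateCol Unit (fun _ => (1:ℝ)) *
        Matrix.replicateRow Unit (fun _ => -r₂/a)) := by
      ext i j
      by_cases hij : i = j <;>
        simp [hRbar, hij, Matrix.mul_apply, Matrix.one_apply] <;>
        field_simp <;> ring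
    rw [hRbar2, Matrix.det_smul, Matrix.det_one_add_replicateCol_mul_replicateRow, Fintype.card_fin]
    have hdp : (fun _ : Fin n => -r₂/a) ⬝ᵥ (fun _ => (1:ℝ)) = N * (-r₂/a) := by
      simp [dotProduct, Finset.sum_const, nsmul_eq_mul, hNdef]
    rw [hdp]
    have hpow : a^n = a^(n-1) * a := by
      rw [← pow_succ, Nat.sub_add_cancel (by omega)]
    rw [hpow]
    have : a * (1 + N * (-r₂/a)) = b := by
      field_simp; simp only [hbdef]; ring
    rw [mul_assoc, this]
  -- moments
  obtain ⟨htr1, htr2⟩ := trace_eig n R hH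
  have hsum : ∑ i, μ i = N := by
    rw [← htr1, Matrix.trace]
    simp [Matrix.diag, hdiag, hNdef]
  have hsumsq : ∑ i, (μ i)^2 = N + S := by
    rw [← htr2, Matrix.trace]
    have : ∀ i, (R * R).diag i = 1 + ∑ j ∈ Finset.univ.erase i, (R i j)^2 := by
      intro i
      have hsymm : ∀ j, R j i = R i j := fun j => by
        have := congrFun (congrFun hH j) i
        simpa [Matrix.conjTranspose_apply] using this.symm
      simp only [Matrix.diag, Matrix.mul_apply]
      have : ∀ j, R i j * R j i = (R i j)^2 := fun j => by rw [hsymm j]; ring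
      rw [Finset.sum_congr rfl fun j _ => this j,
        ← Finset.sum_erase_add _ _ (Finset.mem_univ i), hdiag i]
      ring_nf
    rw [Finset.sum_congr rfl fun i _ => this i, Finset.sum_add_distrib]
    simp [hSdef, hNdef]
  -- eigenvalue bounds
  have hev : ∀ i, (μ i - 1)^2 ≤ ((N-1)*r₂)^2 := by
    intro i
    have hcard : ((Finset.univ.erase i).card : ℝ) = N - 1 := by
      rw [Finset.card_erase_of_mem (Finset.mem_univ i), Finset.card_univ, Fintype.card_fin]
      rw [Nat.cast_sub (by omega)]
      simp [hNdef]
    have hcheb := sq_sum_le_card_mul_sum_sq (s := Finset.univ.erase i) (f := μ)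
    rw [hcard] at hcheb
    have he1 : ∑ j ∈ Finset.univ.erase i, μ j = N - μ i := by
      have := Finset.sum_erase_add Finset.univ μ (Finset.mem_univ i)
      linarith [hsum, this]
    have he2 : ∑ j ∈ Finset.univ.erase i, (μ j)^2 = N + S - (μ i)^2 := by
      have := Finset.sum_erase_add Finset.univ (fun j => (μ j)^2) (Finset.mem_univ i)
      linarith [hsumsq, this]
    rw [he1, he2] at hcheb
    have hNpos : (0:ℝ) < N := by linarith
    nlinarith [hcheb, hS]
  have hdetR : R.det = ∏ i, μ i := by
    have := hH.det_eq_prod_eigenvalues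
    simpa [RCLike.ofReal_real_eq_id] using this
  have hdetRnn : 0 ≤ R.det := hdetR ▸ Finset.prod_nonneg fun i _ => hμnn i
  clear_value μ S
  rcases le_or_gt b 0 with hb0 | hb0
  · have : Rbar.det ≤ 0 := by
      rw [hdetRbar]
      have : 0 ≤ a^(n-1) := pow_nonneg ha.le _
      nlinarith
    linarith
  · -- b > 0 : every eigenvalue is ≥ b
    have hμb : ∀ i, b ≤ μ i := by
      intro i
      have h1 := hev i
      have hK : 0 ≤ (N-1)*r₂ := mul_nonneg (by linarith) hr₂0
      nlinarith [sq_nonneg (μ i - 1 + (N-1)*r₂)]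
    rcases eq_or_lt_of_le hr₂0 with hr0 | hr0
    · -- r₂ = 0 : all eigenvalues equal 1
      have hr0' : r₂ = 0 := hr0.symm
      have hμ1 : ∀ i, μ i = 1 := by
        intro i
        have h1 := hev i
        have h2 : ((N-1)*r₂)^2 = 0 := by rw [hr0']; ring
        nlinarith [h1, h2, sq_nonneg (μ i - 1)]
      have h1 : R.det = 1 := by rw [hdetR]; simp [hμ1]
      have h2 : Rbar.det = 1 := by
        rw [hdetRbar, hadef, hbdef, hr0']
        norm_num
      rw [h1, h2]
    · -- r₂ > 0 : main case
      have hba : b < a := by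
        simp only [hadef, hbdef]
        nlinarith
      have hμpos : ∀ i, 0 < μ i := fun i => lt_of_lt_of_le hb0 (hμb i)
      set c : ℝ := (Real.log a + (b - a)/a - Real.log b)/(a - b)^2 with hcdef
      have hkey : ∀ i, Real.log a + (μ i - a)/a - c * (μ i - a)^2 ≤ Real.log (μ i) :=
        fun i => log_quad_minorant a b hb0 hba (μ i) (hμb i)
      -- sum of quadratic minorants
      have he2 : ∑ i, (μ i - a)^2 = (b - a)^2 := by
        have : ∀ i, (μ i - a)^2 = (μ i)^2 - 2*a*(μ i) + a^2 := fun i => by ring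
        rw [Finset.sum_congr rfl fun i _ => this i]
        rw [Finset.sum_add_distrib, Finset.sum_sub_distrib, ← Finset.mul_sum,
          Finset.sum_const, Finset.card_univ, Fintype.card_fin, nsmul_eq_mul]
        rw [hsumsq, hsum]
        simp only [hadef, hbdef, hNdef]
        rw [hS]
        simp only [hadef, hbdef, hNdef]
        ring
      have he1 : ∑ i, ((μ i - a)/a) = (b - a)/a := by
        rw [← Finset.sum_div, Finset.sum_sub_distrib, Finset.sum_const,
          Finset.card_univ, Fintype.card_fin, nsmul_eq_mul, hsum]
        have : N - N * a = b - a := by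
          simp only [hadef, hbdef]; ring
        rw [this]
      have hsumlog : ((n:ℝ) - 1) * Real.log a + Real.log b ≤ ∑ i, Real.log (μ i) := by
        have hle := Finset.sum_le_sum fun i (_ : i ∈ Finset.univ) => hkey i
        have heq : ∑ i, (Real.log a + (μ i - a)/a - c * (μ i - a)^2)
            = N * Real.log a + (b - a)/a - c * (b - a)^2 := by
          rw [Finset.sum_sub_distrib, Finset.sum_add_distrib, Finset.sum_const,
            Finset.card_univ, Fintype.card_fin, nsmul_eq_mul, he1, ← Finset.mul_sum, he2]
        rw [heq] at hle
        have hcb : c * (b - a)^2 = Real.log a + (b - a)/a - Real.log b := by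
          have hba2 : (b - a)^2 ≠ 0 := pow_ne_zero _ (sub_ne_zero.2 (ne_of_lt hba))
          rw [hcdef, show (a - b)^2 = (b - a)^2 by ring, div_mul_eq_mul_div,
            mul_div_assoc, div_self hba2, mul_one]
        rw [hcb] at hle
        have : N * Real.log a + (b-a)/a - (Real.log a + (b-a)/a - Real.log b)
            = (N - 1) * Real.log a + Real.log b := by ring
        rw [this] at hle
        exact hle
      -- exponentiate
      have hprod : a^(n-1) * b ≤ ∏ i, μ i := by
        have hexp1 : ∏ i, μ i = Real.exp (∑ i, Real.log (μ i)) := by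
          rw [Real.exp_sum]
          exact (Finset.prod_congr rfl fun i _ => (Real.exp_log (hμpos i)).symm)
        have hexp2 : a^(n-1) * b = Real.exp (((n:ℝ)-1) * Real.log a + Real.log b) := by
          rw [Real.exp_add, Real.exp_log hb0]
          congr 1
          have : ((n:ℝ) - 1) = ((n-1 : ℕ) : ℝ) := by
            rw [Nat.cast_sub (by omega)]; simp
          rw [this, Real.exp_nat_mul, Real.exp_log ha]
        rw [hexp1, hexp2]
        exact Real.exp_le_exp.2 hsumlog
      rw [hdetRbar, hdetR]
      exact hprod
end

section
/- Olkin's inequality: Let R be an n×n correlation matrix and r_1 = (∑_{i≠j} r_{ij})/(n(n-1)). Then det R ≤ (1-r_1)^{n-1}(1+(n-1)r_1). -/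
open Matrix BigOperators Finset

lemma amgm {ι : Type*} (s : Finset ι) (x : ι → ℝ) (hx : ∀ i ∈ s, 0 ≤ x i) (hs : s.Nonempty) :
    ∏ i ∈ s, x i ≤ ((∑ i ∈ s, x i) / s.card) ^ s.card := by
  have hcard : (0:ℝ) < s.card := by exact_mod_cast Finset.card_pos.mpr hs
  have h := Real.geom_mean_le_arith_mean s (fun _ => 1) x (fun _ _ => zero_le_one)
    (by simpa using hcard) hx
  simp only [Real.rpow_one, Finset.sum_const, nsmul_eq_mul, mul_one, one_mul] at h
  have hP : (0:ℝ) ≤ ∏ i ∈ s, x i := Finset.prod_nonneg hx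
  calc ∏ i ∈ s, x i = ((∏ i ∈ s, x i) ^ ((s.card:ℝ))⁻¹) ^ (s.card:ℕ) := by
        rw [← Real.rpow_natCast ((∏ i ∈ s, x i) ^ ((s.card:ℝ))⁻¹), ← Real.rpow_mul hP,
          inv_mul_cancel₀ hcard.ne', Real.rpow_one]
    _ ≤ _ := pow_le_pow_left₀ (Real.rpow_nonneg hP _) h _

lemma g_mono (n : ℕ) (hn : 2 ≤ n) {a b : ℝ} (ha0 : 0 ≤ a) (han : a ≤ n) (hb0 : 0 ≤ b)
    (hbn : b ≤ n) (h : (a - b) * (1 - b) ≤ 0) :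
    a * ((n:ℝ) - a) ^ (n - 1) ≤ b * ((n:ℝ) - b) ^ (n - 1) := by
  have hn1 : n - 1 + 1 = n := by omega
  have hnR : (2:ℝ) ≤ n := by exact_mod_cast hn
  rcases eq_or_lt_of_le hb0 with hb | hb
  · have ha : a = 0 := le_antisymm (by nlinarith) ha0
    rw [ha, ← hb]
  rcases eq_or_lt_of_le hbn with hb' | hb'
  · have ha : a = (n:ℝ) := le_antisymm han (by nlinarith)
    rw [ha, hb']
  -- main case 0 < b < n
  have hna : (0:ℝ) ≤ (n:ℝ) - a := by linarith
  have hnb : (0:ℝ) < (n:ℝ) - b := by linarith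
  set i0 : Fin n := ⟨0, by omega⟩ with hi0
  set x : Fin n → ℝ := Function.update (fun _ => b * ((n:ℝ) - a)) i0 (a * ((n:ℝ) - b)) with hx
  have hne : i0 ∈ (Finset.univ : Finset (Fin n)) := Finset.mem_univ _
  have hxnn : ∀ i ∈ (Finset.univ : Finset (Fin n)), 0 ≤ x i := by
    intro i _
    rcases eq_or_ne i i0 with rfl | hi
    · simp only [hx, Function.update_self]; nlinarith
    · simp only [hx, Function.update_of_ne hi]; nlinarith
  have hcard : ((Finset.univ : Finset (Fin n)) \ {i0}).card = n - 1 := by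
    rw [Finset.sdiff_singleton_eq_erase, Finset.card_erase_of_mem hne, Finset.card_univ,
      Fintype.card_fin]
  have hsum : ∑ i, x i = a * ((n:ℝ) - b) + ((n:ℝ) - 1) * (b * ((n:ℝ) - a)) := by
    rw [Finset.sum_update_of_mem hne, Finset.sum_const, hcard, nsmul_eq_mul,
      Nat.cast_sub (by omega : 1 ≤ n)]
    push_cast
    ring
  have hprod : ∏ i, x i = a * ((n:ℝ) - b) * (b * ((n:ℝ) - a)) ^ (n - 1) := by
    rw [Finset.prod_update_of_mem hne, Finset.prod_const, hcard]
  have hmean : (∑ i, x i) / ((n:ℝ)) ≤ b * ((n:ℝ) - b) := by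
    rw [hsum, div_le_iff₀ (by positivity)]
    nlinarith
  have key : a * ((n:ℝ) - b) * (b * ((n:ℝ) - a)) ^ (n - 1) ≤ (b * ((n:ℝ) - b)) ^ n := by
    have h1 := amgm Finset.univ x hxnn ⟨i0, hne⟩
    rw [hprod] at h1
    refine h1.trans ?_
    simp only [Finset.card_univ, Fintype.card_fin]
    exact pow_le_pow_left₀ (div_nonneg (Finset.sum_nonneg hxnn) (by positivity)) hmean n
  have hpos : (0:ℝ) < b ^ (n-1) * ((n:ℝ) - b) := mul_pos (pow_pos hb _) hnb
  have hsplit : (b * ((n:ℝ) - b)) ^ n = (b * ((n:ℝ) - b)) ^ (n-1) * (b * ((n:ℝ) - b)) := by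
    rw [← pow_succ, hn1]
  refine le_of_mul_le_mul_right ?_ hpos
  calc a * ((n:ℝ) - a) ^ (n - 1) * (b ^ (n-1) * ((n:ℝ) - b))
      = a * ((n:ℝ) - b) * (b * ((n:ℝ) - a)) ^ (n - 1) := by rw [mul_pow]; ring
    _ ≤ (b * ((n:ℝ) - b)) ^ n := key
    _ = b * ((n:ℝ) - b) ^ (n - 1) * (b ^ (n-1) * ((n:ℝ) - b)) := by
        rw [hsplit, mul_pow]; ring

lemma key_ineq_s12 (n : ℕ) (hn : 2 ≤ n) (lam d : Fin n → ℝ) (hlam : ∀ i, 0 ≤ lam i)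
    (hd : ∀ i, 0 ≤ d i) (hsum : ∑ i, lam i = n) (hdsum : ∑ i, d i = n)
    (μ : ℝ) (hμ : ∑ i, d i * lam i = n * μ) :
    ∏ i, lam i ≤ μ * (((n:ℝ) - μ) / ((n:ℝ) - 1)) ^ (n - 1) := by
  have hnR : (2:ℝ) ≤ n := by exact_mod_cast hn
  have hn1 : (0:ℝ) < (n:ℝ) - 1 := by linarith
  have hn0 : (0:ℝ) < n := by linarith
  have step : ∀ i0 : Fin n, (lam i0 - μ) * (1 - μ) ≤ 0 → 0 ≤ μ → μ ≤ n →
      ∏ i, lam i ≤ μ * (((n:ℝ) - μ) / ((n:ℝ) - 1)) ^ (n - 1) := by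
    intro i0 hcond hμ0 hμn
    have ha0 : 0 ≤ lam i0 := hlam i0
    have ha_n : lam i0 ≤ n := hsum ▸ Finset.single_le_sum (fun i _ => hlam i) (mem_univ i0)
    have hsum' : ∑ i ∈ univ.erase i0, lam i = (n:ℝ) - lam i0 := by
      have h2 := Finset.add_sum_erase univ lam (mem_univ i0)
      rw [hsum] at h2; linarith
    have hcard : (univ.erase i0).card = n - 1 := by
      rw [Finset.card_erase_of_mem (mem_univ i0), Finset.card_univ, Fintype.card_fin]
    have hcardR : (((univ.erase i0).card : ℕ) : ℝ) = (n:ℝ) - 1 := by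
      rw [hcard, Nat.cast_sub (by omega)]; norm_num
    have hne : (univ.erase i0).Nonempty := Finset.card_pos.mp (by omega)
    have hamgm := amgm (univ.erase i0) lam (fun i _ => hlam i) hne
    rw [hsum', hcardR, hcard] at hamgm
    calc ∏ i, lam i = lam i0 * ∏ i ∈ univ.erase i0, lam i :=
          (Finset.mul_prod_erase _ _ (mem_univ i0)).symm
      _ ≤ lam i0 * (((n:ℝ) - lam i0) / ((n:ℝ) - 1)) ^ (n - 1) :=
          mul_le_mul_of_nonneg_left hamgm ha0
      _ = lam i0 * ((n:ℝ) - lam i0) ^ (n - 1) / ((n:ℝ) - 1) ^ (n - 1) := by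
          rw [div_pow]; ring
      _ ≤ μ * ((n:ℝ) - μ) ^ (n - 1) / ((n:ℝ) - 1) ^ (n - 1) := by
          apply div_le_div_of_nonneg_right ?_ (by positivity)
          exact g_mono n hn ha0 ha_n hμ0 hμn hcond
      _ = μ * (((n:ℝ) - μ) / ((n:ℝ) - 1)) ^ (n - 1) := by rw [div_pow]; ring
  have hne : (Finset.univ : Finset (Fin n)).Nonempty := ⟨⟨0, by omega⟩, mem_univ _⟩
  rcases le_or_gt μ 1 with hμ1 | hμ1
  · obtain ⟨i0, -, hmin⟩ := Finset.exists_min_image univ lam hne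
    have hlow : (n:ℝ) * lam i0 ≤ (n:ℝ) * μ := by
      rw [← hμ, ← hdsum, Finset.sum_mul]
      exact Finset.sum_le_sum fun i _ =>
        mul_le_mul_of_nonneg_left (hmin i (mem_univ i)) (hd i)
    have h1 : lam i0 ≤ μ := le_of_mul_le_mul_left hlow hn0
    have hμ0 : 0 ≤ μ := le_trans (hlam i0) h1
    exact step i0 (mul_nonpos_of_nonpos_of_nonneg (by linarith) (by linarith)) hμ0
      (by linarith)
  · obtain ⟨i0, -, hmax⟩ := Finset.exists_max_image univ lam hne
    have hhigh : (n:ℝ) * μ ≤ (n:ℝ) * lam i0 := by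
      rw [← hμ, ← hdsum, Finset.sum_mul]
      exact Finset.sum_le_sum fun i _ =>
        mul_le_mul_of_nonneg_left (hmax i (mem_univ i)) (hd i)
    have h1 : μ ≤ lam i0 := le_of_mul_le_mul_left hhigh hn0
    have ha_n : lam i0 ≤ n := hsum ▸ Finset.single_le_sum (fun i _ => hlam i) (mem_univ i0)
    exact step i0 (mul_nonpos_of_nonneg_of_nonpos (by linarith) (by linarith)) (by linarith)
      (by linarith)

theorem olkin_inequality (n : ℕ) (hn : 2 ≤ n) (R : Matrix (Fin n) (Fin n) ℝ)
    (hpsd : R.PosSemidef) (hdiag : ∀ i, R i i = 1)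
    (r₁ : ℝ)
    (hr₁ : r₁ = (∑ i, ∑ j ∈ Finset.univ.erase i, R i j) / (n * (n - 1))) :
    R.det ≤ (1 - r₁) ^ (n - 1) * (1 + (n - 1 : ℝ) * r₁) := by
  have hA : R.IsHermitian := hpsd.1
  have hnR : (2:ℝ) ≤ n := by exact_mod_cast hn
  have hn1 : (0:ℝ) < (n:ℝ) - 1 := by linarith
  have hn0 : (0:ℝ) < n := by linarith
  set lam := hA.eigenvalues with hlamdef
  set V : Matrix (Fin n) (Fin n) ℝ := (hA.eigenvectorUnitary : Matrix (Fin n) (Fin n) ℝ)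
    with hV
  set u : Fin n → ℝ := fun _ => 1 with hu
  set w : Fin n → ℝ := u ᵥ* V with hw
  set μ : ℝ := 1 + ((n:ℝ) - 1) * r₁ with hμdef
  have hVV : V * star V = 1 := Unitary.coe_mul_star_self hA.eigenvectorUnitary
  have hwstar : star V *ᵥ u = w := by
    funext i
    simp [hw, Matrix.mulVec, Matrix.vecMul, dotProduct, Matrix.star_apply, mul_comm]
  -- determinant
  have hdet : R.det = ∏ i, lam i := by
    simpa using hA.det_eq_prod_eigenvalues
  -- trace
  have htrace : ∑ i, lam i = (n:ℝ) := by
    have t1 : R.trace = (n:ℝ) := by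
      simp [Matrix.trace, Matrix.diag, hdiag]
    have t2 : R.trace = ∑ i, lam i := by
      conv_lhs => rw [hA.spectral_theorem, Unitary.conjStarAlgAut_apply]
      rw [Matrix.trace_mul_comm, ← Matrix.mul_assoc, Unitary.coe_star_mul_self,
        Matrix.one_mul, Matrix.trace_diagonal]
      simp
      rfl
    rw [← t2, t1]
  -- weights
  have hdsum : ∑ i, (w i)^2 = (n:ℝ) := by
    have e1 : w ⬝ᵥ w = ∑ i, (w i)^2 := by
      simp [dotProduct, sq]
    have e2 : w ⬝ᵥ w = (n:ℝ) := by
      nth_rewrite 2 [← hwstar]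
      rw [Matrix.dotProduct_mulVec, hw, Matrix.vecMul_vecMul, hVV, Matrix.vecMul_one]
      simp [hu, dotProduct]
    rw [← e1, e2]
  -- quadratic form
  have hquad : ∑ i, (w i)^2 * lam i = (n:ℝ) * μ := by
    have q1 : u ⬝ᵥ (R *ᵥ u) = ∑ i, ∑ j, R i j := by
      simp [dotProduct, Matrix.mulVec, hu]
    have q2 : u ⬝ᵥ (R *ᵥ u) = ∑ i, (w i)^2 * lam i := by
      conv_lhs => rw [hA.spectral_theorem, Unitary.conjStarAlgAut_apply]
      rw [← Matrix.mulVec_mulVec, ← Matrix.mulVec_mulVec, hwstar,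
        Matrix.dotProduct_mulVec, ← hw]
      have : lam = hA.eigenvalues := rfl
      simp [Matrix.mulVec_diagonal, dotProduct, Matrix.vecMul_diagonal, sq]
      exact Finset.sum_congr rfl fun i _ => by rw [hlamdef]; ring
    have q3 : ∑ i, ∑ j, R i j = (n:ℝ) * μ := by
      have hoff : (∑ i, ∑ j ∈ Finset.univ.erase i, R i j) = r₁ * ((n:ℝ) * ((n:ℝ) - 1)) := by
        rw [hr₁]; field_simp
      have : ∀ i, ∑ j, R i j = 1 + ∑ j ∈ Finset.univ.erase i, R i j := by
        intro i
        rw [← Finset.add_sum_erase Finset.univ _ (mem_univ i), hdiag]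
      simp_rw [this]
      rw [Finset.sum_add_distrib, hoff, Finset.sum_const, Finset.card_univ, Fintype.card_fin]
      simp [hμdef]; ring
    rw [← q2, q1, q3]
  -- apply key inequality
  have key := key_ineq_s12 n hn lam (fun i => (w i)^2) (hpsd.eigenvalues_nonneg)
    (fun i => sq_nonneg _) htrace hdsum μ hquad
  rw [hdet]
  refine key.trans (le_of_eq ?_)
  have : ((n:ℝ) - μ) / ((n:ℝ) - 1) = 1 - r₁ := by
    rw [hμdef]; field_simp; ring
  rw [this, hμdef]
  ring
end

section
/- Let R̂ = (1-r)I + rJ and R̄ = (1+r)I - rJ be n×n matrices (unit diagonal, off-diagonal entries r and -r respectively) with 0 ≤ r ≤ 1 and n ≥ 2. Then det R̄ ≤ det R̂, i.e., (1+r)^{n-1}(1-(n-1)r) ≤ (1-r)^{n-1}(1+(n-1)r). -/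
open Matrix

lemma det_const_offdiag (n : ℕ) (hn : 2 ≤ n) (a b : ℝ) :
    (Matrix.of fun i j : Fin n => if i = j then a + b else b).det
      = a ^ (n - 1) * (a + n * b) := by
  rcases eq_or_ne a 0 with rfl | ha
  · have h01 : (⟨0, by omega⟩ : Fin n) ≠ (⟨1, by omega⟩ : Fin n) := by
      simp [Fin.ext_iff]
    have hz : (Matrix.of fun i j : Fin n => if i = j then (0:ℝ) + b else b).det = 0 := by
      apply Matrix.det_zero_of_row_eq h01
      funext j
      simp [Matrix.of_apply]
    rw [hz, zero_pow (by omega : n - 1 ≠ 0), zero_mul]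
  · have key : (Matrix.of fun i j : Fin n => if i = j then a + b else b)
        = a • (1 + Matrix.replicateCol Unit (fun _ => b / a) * Matrix.replicateRow Unit (fun _ => (1:ℝ))) := by
      ext i j
      by_cases h : i = j <;>
        simp [h, Matrix.mul_apply, Matrix.one_apply, Matrix.replicateCol, Matrix.replicateRow,
          mul_add, mul_div_cancel₀ _ ha]
    rw [key, Matrix.det_smul, Matrix.det_one_add_replicateCol_mul_replicateRow]
    have hdot : (fun _ : Fin n => (1:ℝ)) ⬝ᵥ (fun _ => b / a) = n * (b / a) := by
      simp [dotProduct, Finset.sum_const]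
    rw [hdot, Fintype.card_fin]
    have hn1 : a ^ n = a ^ (n - 1) * a := by
      rw [← pow_succ]; congr 1; omega
    rw [hn1]
    field_simp

lemma key_ineq_s18 (r : ℝ) (hr0 : 0 ≤ r) (hr1 : r ≤ 1) (k : ℕ) (hk : 1 ≤ k) :
    (1 + r) ^ k * (1 - k * r) ≤ (1 - r) ^ k * (1 + k * r) ∧
    (1 - r) ^ k * (1 + k * r) + (1 + r) ^ k * (1 - k * r) ≤ 2 := by
  induction k with
  | zero => omega
  | succ k ih =>
    rcases Nat.lt_or_ge k 1 with h1 | h1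
    · have : k = 0 := by omega
      subst this
      push_cast
      constructor
      · nlinarith
      · nlinarith [sq_nonneg r]
    · obtain ⟨hD, hS⟩ := ih h1
      have h1r : (0:ℝ) ≤ 1 - r := by linarith
      have h1r' : (0:ℝ) ≤ 1 + r := by linarith
      have hb1 : 1 + ((k:ℝ)+1) * r ≤ (1 + r) ^ (k+1) := by
        have := one_add_mul_le_pow (by linarith : (-2:ℝ) ≤ r) (k+1)
        push_cast at this; linarith
      have hb2 : 1 - ((k:ℝ)+1) * r ≤ (1 - r) ^ (k+1) := by
        have := one_add_mul_le_pow (by linarith : (-2:ℝ) ≤ -r) (k+1)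
        have e : (1 : ℝ) + (-r) = 1 - r := by ring
        rw [e] at this; push_cast at this; linarith
      have hP : (2:ℝ) ≤ (1 - r) ^ (k+1) + (1 + r) ^ (k+1) := by
        nlinarith
      have hQ : (1 - r) ^ (k+1) ≤ (1 + r) ^ (k+1) :=
        pow_le_pow_left₀ h1r (by linarith) _
      have e1 : (1-r)^(k+1)*(1+((k:ℝ)+1)*r) - (1+r)^(k+1)*(1-((k:ℝ)+1)*r)
          = ((1-r)^k*(1+(k:ℝ)*r) - (1+r)^k*(1-(k:ℝ)*r))
            - r*((1-r)^k*(1+(k:ℝ)*r) + (1+r)^k*(1-(k:ℝ)*r))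
            + r*((1-r)^(k+1) + (1+r)^(k+1)) := by ring
      have e2 : (1-r)^(k+1)*(1+((k:ℝ)+1)*r) + (1+r)^(k+1)*(1-((k:ℝ)+1)*r)
          = ((1-r)^k*(1+(k:ℝ)*r) + (1+r)^k*(1-(k:ℝ)*r))
            - r*((1-r)^k*(1+(k:ℝ)*r) - (1+r)^k*(1-(k:ℝ)*r))
            - r*((1+r)^(k+1) - (1-r)^(k+1)) := by ring
      have m1 : r*((1-r)^k*(1+(k:ℝ)*r) + (1+r)^k*(1-(k:ℝ)*r)) ≤ r*2 :=
        mul_le_mul_of_nonneg_left hS hr0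
      have m2 : r*2 ≤ r*((1-r)^(k+1) + (1+r)^(k+1)) :=
        mul_le_mul_of_nonneg_left hP hr0
      have m3 : 0 ≤ r*((1-r)^k*(1+(k:ℝ)*r) - (1+r)^k*(1-(k:ℝ)*r)) :=
        mul_nonneg hr0 (by linarith)
      have m4 : 0 ≤ r*((1+r)^(k+1) - (1-r)^(k+1)) :=
        mul_nonneg hr0 (by linarith)
      push_cast
      constructor
      · linarith
      · linarith

theorem det_Rbar_le_det_Rhat (n : ℕ) (hn : 2 ≤ n) (r : ℝ) (hr0 : 0 ≤ r) (hr1 : r ≤ 1)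
    (Rhat Rbar : Matrix (Fin n) (Fin n) ℝ)
    (hRhat : Rhat = Matrix.of fun i j => if i = j then 1 else r)
    (hRbar : Rbar = Matrix.of fun i j => if i = j then 1 else -r) :
    Rbar.det ≤ Rhat.det ∧
      (1 + r) ^ (n - 1) * (1 - (n - 1 : ℝ) * r) ≤
        (1 - r) ^ (n - 1) * (1 + (n - 1 : ℝ) * r) := by
  have hk : 1 ≤ n - 1 := by omega
  have hineq := (key_ineq_s18 r hr0 hr1 (n - 1) hk).1
  have hcast : ((n - 1 : ℕ) : ℝ) = (n : ℝ) - 1 := by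
    push_cast [Nat.cast_sub (by omega : 1 ≤ n)]; ring
  rw [hcast] at hineq
  refine ⟨?_, hineq⟩
  have hhat : Rhat.det = (1 - r) ^ (n - 1) * ((1 - r) + n * r) := by
    rw [hRhat]
    have e : (Matrix.of fun i j : Fin n => if i = j then (1:ℝ) else r)
        = Matrix.of fun i j : Fin n => if i = j then (1 - r) + r else r := by
      ext i j; by_cases h : i = j <;> simp [h]
    rw [e, det_const_offdiag n hn]
  have hbar : Rbar.det = (1 + r) ^ (n - 1) * ((1 + r) + n * (-r)) := by
    rw [hRbar]
    have e : (Matrix.of fun i j : Fin n => if i = j then (1:ℝ) else -r)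
        = Matrix.of fun i j : Fin n => if i = j then (1 + r) + (-r) else -r := by
      ext i j; by_cases h : i = j <;> simp [h]
    rw [e, det_const_offdiag n hn]
  rw [hhat, hbar]
  have e1 : (1 - r) + (n:ℝ) * r = 1 + ((n:ℝ) - 1) * r := by ring
  have e2 : (1 + r) + (n:ℝ) * (-r) = 1 - ((n:ℝ) - 1) * r := by ring
  rw [e1, e2]
  exact hineq
end
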